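/- Let f ∈ Homeo₀(𝕋^d) with lift F, let K ⊆ 𝕋^d be a compact f-invariant set on which f is minimal, let v ∈ ℝ^d \ {0}, λ ∈ ℝ with ρ_K(F) ⊆ λv + {v}^⊥, and suppose sup_{n∈ℕ, z∈K} |D_v(n,z)| = ∞. Then there exists a residual (dense G_δ) subset ℛ ⊆ K such that sup_{n∈ℕ} D_v(n,z) = +∞ and inf_{n∈ℕ} D_v(n,z) = −∞ for all z ∈ ℛ. -/

import Mathlib

open Filter Topology Set
open scoped RealInnerProductSpace

noncomputable section

abbrev E (d : ℕ) : Type := EuclideanSpace ℝ (Fin d)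

/-- The integer lattice `ℤ^d` inside `ℝ^d`. -/
def intLattice (d : ℕ) : AddSubgroup (E d) where
  carrier := {x : E d | ∀ i, ∃ m : ℤ, x i = (m : ℝ)}
  zero_mem' := fun i => ⟨0, by simp⟩
  add_mem' := by
    intro a b ha hb i
    obtain ⟨m, hm⟩ := ha i
    obtain ⟨n, hn⟩ := hb i
    refine ⟨m + n, ?_⟩
    have h : (a + b) i = a i + b i := rfl
    rw [h, hm, hn]; push_cast; ring
  neg_mem' := by
    intro a ha i
    obtain ⟨m, hm⟩ := ha i
    refine ⟨-m, ?_⟩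
    have h : (-a) i = -(a i) := rfl
    rw [h, hm]; push_cast; ring

/-- The torus `𝕋^d = ℝ^d / ℤ^d`. -/
abbrev Torus (d : ℕ) : Type := E d ⧸ intLattice d

/-- The canonical projection `π : ℝ^d → 𝕋^d`. -/
def Tproj (d : ℕ) : E d → Torus d := QuotientAddGroup.mk

/-- `F` is a lift of `f`; together with `F` being a homeomorphism this encodes
`f ∈ Homeo₀(𝕋^d)` with lift `F`. -/
def IsLiftOf {d : ℕ} (F : E d ≃ₜ E d) (f : Torus d → Torus d) : Prop :=
  (∀ z : E d, Tproj d (F z) = f (Tproj d z)) ∧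
  (∀ z : E d, ∀ m ∈ intLattice d, F (z + m) = F z + m)

/-- The rotation set of `f` on `A ⊆ 𝕋^d`. -/
def rotSetOn {d : ℕ} (F : E d ≃ₜ E d) (A : Set (Torus d)) : Set (E d) :=
  {ρ | ∃ (n : ℕ → ℕ) (z : ℕ → E d), StrictMono n ∧ (∀ i, Tproj d (z i) ∈ A) ∧
      Tendsto (fun i => (n i : ℝ)⁻¹ • ((F : E d → E d)^[n i] (z i) - z i)) atTop (𝓝 ρ)}

/-- The rotation set `ρ(F)`. -/
def rotSet {d : ℕ} (F : E d ≃ₜ E d) : Set (E d) := rotSetOn F Set.univ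

/-- The deviation from the constant rotation, `D(n,z) = F^n(z) - z - nρ`. -/
def dev {d : ℕ} (F : E d ≃ₜ E d) (ρ : E d) (n : ℕ) (z : E d) : E d :=
  (F : E d → E d)^[n] z - z - (n : ℝ) • ρ

/-- The deviation parallel to `v`, `D_v(n,z) = ⟨F^n(z) - z - nρ, v⟩`. -/
def devIn {d : ℕ} (F : E d ≃ₜ E d) (ρ : E d) (v : E d) (n : ℕ) (z : E d) : ℝ :=
  ⟪dev F ρ n z, v⟫

/-- `1, ρ_1, …, ρ_d` are linearly independent over `ℚ`. -/
def TotallyIrrational {d : ℕ} (ρ : E d) : Prop :=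
  ∀ (k : Fin d → ℤ) (m : ℤ), (∑ i, (k i : ℝ) * ρ i) = (m : ℝ) → ∀ i, k i = 0

/-- `f` has bounded mean motion (w.r.t. the rotation vector `ρ`). -/
def BoundedMeanMotion {d : ℕ} (F : E d ≃ₜ E d) (ρ : E d) : Prop :=
  ∃ C : ℝ, ∀ (n : ℕ) (z : E d), ‖dev F ρ n z‖ ≤ C

/-- `f` is non-wandering: no nonempty open set is wandering. -/
def NonWandering {d : ℕ} (f : Torus d → Torus d) : Prop :=
  ∀ U : Set (Torus d), IsOpen U → U.Nonempty → ∃ n : ℕ, 0 < n ∧ (U ∩ f^[n] '' U).Nonempty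

/-- Projection of the deviation vector to the linear subspace `V`. -/
def devProj {d : ℕ} (F : E d ≃ₜ E d) (V : Submodule ℝ (E d)) (ρ : E d) (n : ℕ) (z : E d) : E d :=
  (V.orthogonalProjectionOnto (dev F ρ n z) : E d)

/-- The set of asymptotic directions `𝒜_V(z)`. -/
def asympDirs {d : ℕ} (F : E d ≃ₜ E d) (V : Submodule ℝ (E d)) (ρ : E d) (z : E d) :
    Set (E d) :=
  {v | ‖v‖ = 1 ∧ ∀ ε > (0 : ℝ), ∀ r > (0 : ℝ), ∃ n : ℕ,
      r < ‖devProj F V ρ n z‖ ∧ ‖(‖devProj F V ρ n z‖)⁻¹ • devProj F V ρ n z - v‖ < ε}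

/-- `S^+(v) = {w ∈ 𝕊^{d-1} : ⟨v,w⟩ > 0}`. -/
def Splus {d : ℕ} (v : E d) : Set (E d) := {w | ‖w‖ = 1 ∧ 0 < ⟪v, w⟫}

/-- `z` is `ε`-Lyapunov stable for `h`. -/
def LyapStable {X : Type*} [PseudoMetricSpace X] (h : X → X) (ε : ℝ) (z : X) : Prop :=
  ∃ δ > (0 : ℝ), ∀ n : ℕ, ∀ w, dist z w < δ → dist (h^[n] z) (h^[n] w) < ε

/-- `ε_f`, the largest `ε` such that `ε`-close points have `1/2`-close images. -/
def epsF {d : ℕ} (f : Torus d → Torus d) : ℝ :=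
  sSup {ε : ℝ | 0 < ε ∧ ∀ z z' : Torus d, dist z z' < ε → dist (f z) (f z') < 1 / 2}

/-- `ℤ`-indexed iterates of a homeomorphism. -/
def iterZ {d : ℕ} (F : E d ≃ₜ E d) : ℤ → E d → E d
  | .ofNat n => (F : E d → E d)^[n]
  | .negSucc n => (F.symm : E d → E d)^[n + 1]

/-- `ℤ`-indexed deviations parallel to `v`. -/
def devZIn {d : ℕ} (F : E d ≃ₜ E d) (ρ v : E d) (n : ℤ) (z : E d) : ℝ :=
  ⟪iterZ F n z - z - (n : ℝ) • ρ, v⟫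


section AuxProof

variable {d : ℕ}

lemma iter_lift (F : E d ≃ₜ E d)
    (hF : ∀ z : E d, ∀ m ∈ intLattice d, F (z + m) = F z + m)
    (n : ℕ) (z m : E d) (hm : m ∈ intLattice d) :
    (F : E d → E d)^[n] (z + m) = (F : E d → E d)^[n] z + m := by
  induction n with
  | zero => simp
  | succ n ih =>
    rw [Function.iterate_succ_apply', Function.iterate_succ_apply', ih]
    exact hF _ m hm

lemma devIn_lattice (F : E d ≃ₜ E d)
    (hF : ∀ z : E d, ∀ m ∈ intLattice d, F (z + m) = F z + m)
    (ρ v : E d) (n : ℕ) (z m : E d) (hm : m ∈ intLattice d) :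
    devIn F ρ v n (z + m) = devIn F ρ v n z := by
  unfold devIn dev
  rw [iter_lift F hF n z m hm]
  congr 1
  abel

lemma continuous_devIn (F : E d ≃ₜ E d) (ρ v : E d) (n : ℕ) :
    Continuous (fun z : E d => devIn F ρ v n z) := by
  unfold devIn dev
  exact Continuous.inner (((F.continuous.iterate n).sub continuous_id).sub continuous_const)
    continuous_const

lemma devIn_zero (F : E d ≃ₜ E d) (ρ v : E d) (z : E d) : devIn F ρ v 0 z = 0 := by
  simp [devIn, dev]

lemma devIn_cocycle (F : E d ≃ₜ E d) (ρ v : E d) (a b : ℕ) (z : E d) :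
    devIn F ρ v (a + b) z = devIn F ρ v b ((F : E d → E d)^[a] z) + devIn F ρ v a z := by
  unfold devIn dev
  rw [← inner_add_left]
  congr 1
  rw [show (a + b : ℕ) = b + a from add_comm a b, Function.iterate_add_apply]
  push_cast
  rw [add_smul]
  abel

end AuxProof

section AbstractCocycle

variable {X : Type*} [TopologicalSpace X]

lemma unif_recurrence {f : X → X} (hf : Continuous f)
    {K : Set X} (hKc : IsCompact K)
    (hmin : ∀ z ∈ K, K ⊆ closure (Set.range fun n : ℕ => f^[n] z))
    {V : Set X} (hV : IsOpen V) (hVK : (V ∩ K).Nonempty) :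
    ∃ N : ℕ, ∀ ζ ∈ K, ∃ k ≤ N, f^[k] ζ ∈ V := by
  obtain ⟨z₀, hz₀V, hz₀K⟩ := hVK
  have hcover : K ⊆ ⋃ n : ℕ, (f^[n]) ⁻¹' V := by
    intro ζ hζ
    have h1 : z₀ ∈ closure (Set.range fun n : ℕ => f^[n] ζ) := hmin ζ hζ hz₀K
    rcases mem_closure_iff.1 h1 V hV hz₀V with ⟨y, hyV, ⟨n, rfl⟩⟩
    exact mem_iUnion.2 ⟨n, hyV⟩
  obtain ⟨t, ht⟩ := hKc.elim_finite_subcover (fun n : ℕ => (f^[n]) ⁻¹' V)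
    (fun n => hV.preimage (hf.iterate n)) hcover
  refine ⟨t.sup id, fun ζ hζ => ?_⟩
  rcases mem_iUnion₂.1 (ht hζ) with ⟨k, hkt, hk⟩
  exact ⟨k, Finset.le_sup (f := id) hkt, hk⟩

lemma iterate_mem {f : X → X} {K : Set X} (hfK : ∀ ζ ∈ K, f ζ ∈ K) :
    ∀ (k : ℕ), ∀ ζ ∈ K, f^[k] ζ ∈ K := by
  intro k
  induction k with
  | zero => simpa using fun ζ h => h
  | succ k ih =>
    intro ζ hζ
    rw [Function.iterate_succ_apply']
    exact hfK _ (ih ζ hζ)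

lemma bound_upto {K : Set X} (hKc : IsCompact K) (hKne : K.Nonempty)
    (D : ℕ → X → ℝ) (hDc : ∀ n, Continuous (D n)) (N : ℕ) :
    ∃ B : ℝ, 0 ≤ B ∧ ∀ k ≤ N, ∀ ζ ∈ K, |D k ζ| ≤ B := by
  induction N with
  | zero =>
    obtain ⟨x, hx, hmax⟩ := hKc.exists_isMaxOn hKne (hDc 0).abs.continuousOn
    exact ⟨|D 0 x|, abs_nonneg _, fun k hk ζ hζ => by
      interval_cases k
      exact hmax hζ⟩
  | succ n ih =>
    obtain ⟨B, hB0, hB⟩ := ih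
    obtain ⟨x, hx, hmax⟩ := hKc.exists_isMaxOn hKne (hDc (n+1)).abs.continuousOn
    refine ⟨max B (|D (n+1) x|), le_max_of_le_left hB0, fun k hk ζ hζ => ?_⟩
    rcases Nat.lt_succ_iff_lt_or_eq.1 (Nat.lt_succ_of_le hk) with h | rfl
    · exact le_max_of_le_left (hB k (Nat.lt_succ_iff.1 h) ζ hζ)
    · exact le_max_of_le_right (hmax hζ)

end AbstractCocycle

section KeyLemma

variable {X : Type*} [TopologicalSpace X]

lemma cocycle_bddBelow {f : X → X} (hf : Continuous f)
    {K : Set X} (hKc : IsCompact K) (hKne : K.Nonempty)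
    (hfK : ∀ ζ ∈ K, f ζ ∈ K)
    (hmin : ∀ z ∈ K, K ⊆ closure (Set.range fun n : ℕ => f^[n] z))
    (D : ℕ → X → ℝ) (hDc : ∀ n, Continuous (D n))
    (hD0 : ∀ ζ, D 0 ζ = 0)
    (hcoc : ∀ a b ζ, D (a + b) ζ = D b (f^[a] ζ) + D a ζ)
    (hsub : ∀ ε > (0:ℝ), ∃ N : ℕ, ∀ n ≥ N, ∀ ζ ∈ K, |D n ζ| ≤ ε * n)
    {C : ℝ} (hub : ∀ ζ ∈ K, ∀ n, D n ζ ≤ C) :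
    ∀ ζ ∈ K, ∀ n, -(2*C+2) ≤ D n ζ := by
  obtain ⟨ζ₁, hζ₁⟩ := hKne
  have hC0 : 0 ≤ C := by have := hub ζ₁ hζ₁ 0; rwa [hD0] at this
  have hitK : ∀ (k : ℕ), ∀ ζ ∈ K, f^[k] ζ ∈ K := iterate_mem hfK
  set ψ : X → ℝ := fun ζ => ⨆ n, D n ζ with hψdef
  have hbdd : ∀ ζ ∈ K, BddAbove (Set.range fun n => D n ζ) := by
    intro ζ hζ
    exact ⟨C, by rintro x ⟨n, rfl⟩; exact hub ζ hζ n⟩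
  have hψ_le : ∀ ζ ∈ K, ψ ζ ≤ C := fun ζ hζ => ciSup_le (hub ζ hζ)
  have hψ_nonneg : ∀ ζ ∈ K, 0 ≤ ψ ζ := by
    intro ζ hζ
    have := le_ciSup (hbdd ζ hζ) 0
    rwa [hD0] at this
  set Sg : ℕ → X → ℝ := fun m ζ => ψ ζ - ψ (f^[m] ζ) - D m ζ with hSgdef
  have hSadd : ∀ a b ζ, Sg (a + b) ζ = Sg a ζ + Sg b (f^[a] ζ) := by
    intro a b ζ
    have h1 : f^[b] (f^[a] ζ) = f^[a + b] ζ := by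
      rw [add_comm, Function.iterate_add_apply]
    simp only [hSgdef, hcoc a b ζ, h1]
    ring
  have hS0 : ∀ ζ, Sg 0 ζ = 0 := by
    intro ζ
    simp only [hSgdef, Function.iterate_zero_apply, hD0]
    ring
  have hS1 : ∀ ζ ∈ K, 0 ≤ Sg 1 ζ := by
    intro ζ hζ
    have h2 : ψ (f^[1] ζ) ≤ ψ ζ - D 1 ζ := by
      apply ciSup_le
      intro n
      have h3 : D n (f^[1] ζ) = D (1 + n) ζ - D 1 ζ := by rw [hcoc 1 n ζ]; ring
      have h4 : D (1 + n) ζ ≤ ψ ζ := le_ciSup (hbdd ζ hζ) (1 + n)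
      linarith
    simp only [hSgdef]
    have : D 1 ζ = D 1 ζ := rfl
    have h5 : f^[1] ζ = f ζ := congrFun (Function.iterate_one f) ζ
    rw [h5] at h2 ⊢
    linarith
  have hSnonneg : ∀ (b : ℕ), ∀ ζ ∈ K, 0 ≤ Sg b ζ := by
    intro b
    induction b with
    | zero => intro ζ hζ; rw [hS0]
    | succ b ih =>
      intro ζ hζ
      have := hSadd b 1 ζ
      have h1 := ih ζ hζ
      have h2 := hS1 _ (hitK b ζ hζ)
      rw [show b + 1 = b + 1 from rfl, this]
      linarith
  have hSmono : ∀ (a b : ℕ), a ≤ b → ∀ ζ ∈ K, Sg a ζ ≤ Sg b ζ := by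
    intro a b hab ζ hζ
    obtain ⟨c, rfl⟩ := Nat.exists_eq_add_of_le hab
    rw [hSadd a c ζ]
    have := hSnonneg c _ (hitK a ζ hζ)
    linarith
  by_contra hcon
  push_neg at hcon
  obtain ⟨ζ₀, hζ₀K, n₀, hn₀⟩ := hcon
  have hn₀pos : n₀ ≠ 0 := by
    intro h
    rw [h, hD0] at hn₀
    linarith
  set V : Set X := (D n₀) ⁻¹' (Set.Iio (-(2*C+2))) with hVdef
  have hVopen : IsOpen V := (isOpen_Iio).preimage (hDc n₀)
  have hVK : (V ∩ K).Nonempty := ⟨ζ₀, hn₀, hζ₀K⟩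
  have hgain : ∀ ζ, ζ ∈ V → ζ ∈ K → 1 ≤ Sg n₀ ζ := by
    intro ζ hζV hζK
    have h1 : D n₀ ζ < -(2*C+2) := hζV
    have h2 := hψ_nonneg ζ hζK
    have h3 := hψ_le _ (hitK n₀ ζ hζK)
    simp only [hSgdef]
    linarith
  obtain ⟨N, hN⟩ := unif_recurrence hf hKc hmin hVopen hVK
  set T : ℕ := N + n₀ with hTdef
  have hT1 : 1 ≤ T := by omega
  have key : ∀ (j : ℕ), ∀ ζ ∈ K, (j : ℝ) ≤ Sg (j * T) ζ := by
    intro j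
    induction j with
    | zero => intro ζ hζ; simp [hS0]
    | succ j ih =>
      intro ζ hζ
      obtain ⟨k, hkN, hkV⟩ := hN ζ hζ
      have hkn₀T : k + n₀ ≤ T := by omega
      have hle : k + n₀ ≤ (j+1) * T := le_trans hkn₀T (by nlinarith)
      have hsplit : (j+1) * T = (k + n₀) + ((j+1) * T - (k + n₀)) := by omega
      have h1 : Sg ((j+1) * T) ζ
          = Sg (k + n₀) ζ + Sg ((j+1) * T - (k + n₀)) (f^[k + n₀] ζ) := by
        conv_lhs => rw [hsplit]
        exact hSadd _ _ ζ
      have h2 : Sg (k + n₀) ζ = Sg k ζ + Sg n₀ (f^[k] ζ) := hSadd k n₀ ζ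
      have h3 : 0 ≤ Sg k ζ := hSnonneg k ζ hζ
      have h4 : 1 ≤ Sg n₀ (f^[k] ζ) := hgain _ hkV (hitK k ζ hζ)
      have h5 : j * T ≤ (j+1) * T - (k + n₀) := by
        have : (j+1) * T = j * T + T := by ring
        omega
      have h6 : Sg (j * T) (f^[k + n₀] ζ) ≤ Sg ((j+1) * T - (k + n₀)) (f^[k + n₀] ζ) :=
        hSmono _ _ h5 _ (hitK _ ζ hζ)
      have h7 := ih _ (hitK (k + n₀) ζ hζ)
      push_cast
      linarith
  have hTpos : (0:ℝ) < 2 * T := by positivity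
  obtain ⟨N₁, hN₁⟩ := hsub (1 / (2 * T)) (by positivity)
  set j : ℕ := N₁ + ⌈2 * C⌉₊ + 1 with hjdef
  have hjT : N₁ ≤ j * T := by nlinarith
  have hDjT := hN₁ (j * T) hjT ζ₁ hζ₁
  have hDabs : |D (j * T) ζ₁| ≤ (j : ℝ) / 2 := by
    have : (1 / (2 * T) : ℝ) * ((j : ℕ) * T : ℕ) = j / 2 := by
      push_cast
      field_simp
    rw [this] at hDjT
    exact hDjT
  have hkey := key j ζ₁ hζ₁
  have hup : Sg (j * T) ζ₁ ≤ C + (j:ℝ)/2 := by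
    have h1 := hψ_le ζ₁ hζ₁
    have h2 := hψ_nonneg _ (hitK (j * T) ζ₁ hζ₁)
    have h3 : -((j:ℝ)/2) ≤ -(D (j * T) ζ₁) := by
      have := abs_le.1 hDabs
      linarith [this.1, this.2]
    simp only [hSgdef]
    have := (abs_le.1 hDabs).1
    linarith
  have hj2C : (2*C : ℝ) < j := by
    have h1 : (2*C : ℝ) ≤ (⌈2*C⌉₊ : ℝ) := Nat.le_ceil _
    have h2 : (⌈2*C⌉₊ : ℝ) < j := by
      rw [hjdef]
      push_cast
      linarith
    linarith
  have hfin : (j:ℝ) ≤ C + (j:ℝ)/2 := le_trans hkey hup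
  linarith

end KeyLemma

section BoundedLemma

variable {X : Type*} [TopologicalSpace X]

lemma cocycle_bounded_of_bddAbove_on_open {f : X → X} (hf : Continuous f)
    {K : Set X} (hKc : IsCompact K) (hKne : K.Nonempty)
    (hfK : ∀ ζ ∈ K, f ζ ∈ K)
    (hmin : ∀ z ∈ K, K ⊆ closure (Set.range fun n : ℕ => f^[n] z))
    (D : ℕ → X → ℝ) (hDc : ∀ n, Continuous (D n))
    (hD0 : ∀ ζ, D 0 ζ = 0)
    (hcoc : ∀ a b ζ, D (a + b) ζ = D b (f^[a] ζ) + D a ζ)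
    (hsub : ∀ ε > (0:ℝ), ∃ N : ℕ, ∀ n ≥ N, ∀ ζ ∈ K, |D n ζ| ≤ ε * n)
    {V : Set X} (hV : IsOpen V) (hVK : (V ∩ K).Nonempty)
    {C₀ : ℝ} (hbd : ∀ ζ ∈ V ∩ K, ∀ n, D n ζ ≤ C₀) :
    ∃ C : ℝ, ∀ ζ ∈ K, ∀ n, |D n ζ| ≤ C := by
  have hitK : ∀ (k : ℕ), ∀ ζ ∈ K, f^[k] ζ ∈ K := iterate_mem hfK
  obtain ⟨N, hN⟩ := unif_recurrence hf hKc hmin hV hVK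
  obtain ⟨B, hB0, hB⟩ := bound_upto hKc hKne D hDc N
  set C₁ : ℝ := |C₀| + B with hC₁def
  have hC₁0 : 0 ≤ C₁ := by positivity
  have hup : ∀ ζ ∈ K, ∀ n, D n ζ ≤ C₁ := by
    intro ζ hζ n
    rcases le_or_gt n N with h | h
    · have := hB n h ζ hζ
      have h2 := (abs_le.1 this).2
      have : (0:ℝ) ≤ |C₀| := abs_nonneg _
      linarith
    · obtain ⟨k, hkN, hkV⟩ := hN ζ hζ
      have hkn : k ≤ n := le_trans hkN h.le
      have h1 : D n ζ = D (n - k) (f^[k] ζ) + D k ζ := by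
        have := hcoc k (n - k) ζ
        rwa [show k + (n - k) = n from by omega] at this
      have h2 : D (n - k) (f^[k] ζ) ≤ C₀ := hbd _ ⟨hkV, hitK k ζ hζ⟩ _
      have h3 : D k ζ ≤ B := (abs_le.1 (hB k hkN ζ hζ)).2
      have h4 : C₀ ≤ |C₀| := le_abs_self _
      linarith
  have hlow := cocycle_bddBelow hf hKc hKne hfK hmin D hDc hD0 hcoc hsub hup
  refine ⟨2 * C₁ + 2, fun ζ hζ n => abs_le.2 ⟨?_, ?_⟩⟩
  · have := hlow ζ hζ n; linarith
  · have := hup ζ hζ n; linarith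

end BoundedLemma

section Sublinear

variable {d : ℕ}

lemma floorPart_mem (w : E d) :
    ((WithLp.equiv 2 (∀ _ : Fin d, ℝ)).symm (fun i => (⌊w i⌋ : ℝ))) ∈ intLattice d := by
  intro i
  exact ⟨⌊w i⌋, rfl⟩

lemma fract_norm_le (w : E d) :
    ‖w - (WithLp.equiv 2 (∀ _ : Fin d, ℝ)).symm (fun i => (⌊w i⌋ : ℝ))‖ ≤ Real.sqrt d := by
  rw [EuclideanSpace.norm_eq]
  apply Real.sqrt_le_sqrt
  have h1 : ∀ i : Fin d,
      ‖(w - (WithLp.equiv 2 (∀ _ : Fin d, ℝ)).symm (fun i => (⌊w i⌋ : ℝ))) i‖ ^ 2 ≤ 1 := by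
    intro i
    have h2 : (w - (WithLp.equiv 2 (∀ _ : Fin d, ℝ)).symm (fun i => (⌊w i⌋ : ℝ))) i
        = Int.fract (w i) := rfl
    rw [h2, Real.norm_eq_abs, abs_of_nonneg (Int.fract_nonneg _), sq_le_one_iff_abs_le_one,
      abs_of_nonneg (Int.fract_nonneg _)]
    exact (Int.fract_lt_one _).le
  calc ∑ i, ‖(w - (WithLp.equiv 2 (∀ _ : Fin d, ℝ)).symm (fun i => (⌊w i⌋ : ℝ))) i‖ ^ 2
      ≤ ∑ _i : Fin d, (1:ℝ) := Finset.sum_le_sum (fun i _ => h1 i)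
    _ = d := by simp

lemma disp_bounded (F : E d ≃ₜ E d)
    (hF : ∀ z : E d, ∀ m ∈ intLattice d, F (z + m) = F z + m) :
    ∃ M : ℝ, 0 ≤ M ∧ ∀ w : E d, ‖F w - w‖ ≤ M := by
  have hball : IsCompact (Metric.closedBall (0 : E d) (Real.sqrt d)) := isCompact_closedBall _ _
  have hne : (Metric.closedBall (0 : E d) (Real.sqrt d)).Nonempty :=
    ⟨0, Metric.mem_closedBall_self (Real.sqrt_nonneg _)⟩
  obtain ⟨x₀, _, hmax⟩ := hball.exists_isMaxOn hne
    ((F.continuous.sub continuous_id).norm.continuousOn)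
  refine ⟨‖F x₀ - x₀‖, norm_nonneg _, fun w => ?_⟩
  set m : E d := (WithLp.equiv 2 (∀ _ : Fin d, ℝ)).symm (fun i => (⌊w i⌋ : ℝ)) with hmdef
  have hm : m ∈ intLattice d := floorPart_mem w
  have hq : w - m ∈ Metric.closedBall (0 : E d) (Real.sqrt d) := by
    rw [Metric.mem_closedBall, dist_zero_right]
    exact fract_norm_le w
  have heq : F w - w = F (w - m) - (w - m) := by
    have h1 : F ((w - m) + m) = F (w - m) + m := hF (w - m) m hm
    rw [sub_add_cancel] at h1
    rw [h1]
    abel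
  rw [heq]
  exact hmax hq

lemma iterate_disp_bounded (F : E d ≃ₜ E d) {M : ℝ}
    (hM : ∀ w : E d, ‖F w - w‖ ≤ M) (n : ℕ) (w : E d) :
    ‖(F : E d → E d)^[n] w - w‖ ≤ n * M := by
  induction n with
  | zero => simp
  | succ n ih =>
    have h1 : (F : E d → E d)^[n+1] w - w
        = (F ((F : E d → E d)^[n] w) - (F : E d → E d)^[n] w)
          + ((F : E d → E d)^[n] w - w) := by
      rw [Function.iterate_succ_apply']
      abel
    rw [h1]
    calc ‖_ + _‖ ≤ _ := norm_add_le _ _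
      _ ≤ M + n * M := add_le_add (hM _) ih
      _ = ↑(n+1) * M := by push_cast; ring

lemma sublinear_devIn (F : E d ≃ₜ E d)
    (hF : ∀ z : E d, ∀ m ∈ intLattice d, F (z + m) = F z + m)
    (K : Set (Torus d)) (v : E d) (lam : ℝ)
    (hrot : ∀ ρ' ∈ rotSetOn F K, ⟪ρ' - lam • v, v⟫ = 0) :
    ∀ ε > (0:ℝ), ∃ N : ℕ, ∀ n ≥ N, ∀ z : E d, Tproj d z ∈ K →
      |devIn F (lam • v) v n z| ≤ ε * n := by
  obtain ⟨M, hM0, hM⟩ := disp_bounded F hF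
  intro ε hε
  by_contra hcon
  push_neg at hcon
  have hfreq : ∃ᶠ n in atTop, ∃ z : E d, Tproj d z ∈ K ∧ ε * n < |devIn F (lam • v) v n z| := by
    rw [frequently_atTop]
    intro N
    obtain ⟨n, hnN, z, hz1, hz2⟩ := hcon N
    exact ⟨n, hnN, z, hz1, hz2⟩
  obtain ⟨φ, hφ, hP⟩ := extraction_of_frequently_atTop hfreq
  choose z hzK hzdev using hP
  have hφpos : ∀ i, 0 < φ i := by
    intro i
    rcases Nat.eq_zero_or_pos (φ i) with h | h
    · exfalso
      have := hzdev i
      rw [h] at this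
      rw [devIn_zero] at this
      simp at this
    · exact h
  set u : ℕ → E d := fun i => ((φ i : ℝ))⁻¹ • ((F : E d → E d)^[φ i] (z i) - z i) with hudef
  have hub : ∀ i, u i ∈ Metric.closedBall (0 : E d) M := by
    intro i
    rw [Metric.mem_closedBall, dist_zero_right, hudef]
    rw [norm_smul, norm_inv, Real.norm_natCast]
    have h1 : ‖(F : E d → E d)^[φ i] (z i) - z i‖ ≤ (φ i) * M := iterate_disp_bounded F hM _ _
    have h2 : (0:ℝ) < φ i := by exact_mod_cast hφpos i
    calc ((φ i : ℝ))⁻¹ * ‖(F : E d → E d)^[φ i] (z i) - z i‖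
        ≤ ((φ i : ℝ))⁻¹ * ((φ i) * M) := by
          apply mul_le_mul_of_nonneg_left h1 (by positivity)
      _ = M := by field_simp
  obtain ⟨ρ', hρ'mem, ψ, hψ, hconv⟩ := (isCompact_closedBall (0 : E d) M).tendsto_subseq hub
  have hρ'rot : ρ' ∈ rotSetOn F K :=
    ⟨φ ∘ ψ, z ∘ ψ, hφ.comp hψ, fun i => hzK (ψ i), hconv⟩
  have horth : ⟪ρ' - lam • v, v⟫ = 0 := hrot ρ' hρ'rot
  set g : E d → ℝ := fun w => ⟪w - lam • v, v⟫ with hgdef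
  have hgc : Continuous g :=
    Continuous.inner (continuous_id.sub continuous_const) continuous_const
  have hgu : ∀ i, ε < |g (u i)| := by
    intro i
    have h2 : (0:ℝ) < φ i := by exact_mod_cast hφpos i
    have hne : ((φ i : ℝ)) ≠ 0 := ne_of_gt h2
    have h4 : g (u i) = ((φ i : ℝ))⁻¹ * devIn F (lam • v) v (φ i) (z i) := by
      show ⟪((φ i : ℝ))⁻¹ • ((F : E d → E d)^[φ i] (z i) - z i) - lam • v, v⟫
          = ((φ i : ℝ))⁻¹ * devIn F (lam • v) v (φ i) (z i)
      rw [show ((φ i : ℝ))⁻¹ • ((F : E d → E d)^[φ i] (z i) - z i) - lam • v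
          = ((φ i : ℝ))⁻¹ • ((F : E d → E d)^[φ i] (z i) - z i - ((φ i : ℝ)) • (lam • v)) from by
        match_scalars <;> (field_simp; try ring)]
      rw [real_inner_smul_left]
      rfl
    rw [h4, abs_mul, abs_inv, abs_of_pos h2, inv_mul_eq_div, lt_div_iff₀ h2]
    exact hzdev i
  have htend : Tendsto (fun i => |g (u (ψ i))|) atTop (𝓝 |g ρ'|) :=
    ((hgc.tendsto ρ').comp hconv).abs
  have hge : ε ≤ |g ρ'| :=
    ge_of_tendsto htend (Eventually.of_forall (fun i => (hgu (ψ i)).le))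
  rw [hgdef] at hge
  simp only at hge
  rw [horth] at hge
  simp at hge
  linarith

end Sublinear


set_option maxHeartbeats 1000000 in
set_option synthInstance.maxHeartbeats 400000 in
/-- **Lemma (minimal, fully unbounded deviations).** If `f|K` is minimal,
`ρ_K(F) ⊆ λv + {v}^⊥` and the deviations parallel to `v` are not uniformly bounded on
`K`, then there is a residual (dense `G_δ`) subset `ℛ ⊆ K` on which
`sup_{n∈ℕ} D_v(n,z) = +∞` and `inf_{n∈ℕ} D_v(n,z) = -∞`. -/
theorem residual_fully_unbounded_devIn {d : ℕ} (f : Torus d → Torus d)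
    (F : E d ≃ₜ E d) (hlift : IsLiftOf F f) (K : Set (Torus d)) (hKc : IsCompact K)
    (hKne : K.Nonempty) (hKinv : f '' K = K)
    (hmin : ∀ z ∈ K, K ⊆ closure (Set.range fun n : ℕ => f^[n] z))
    (v : E d) (hv : v ≠ 0) (lam : ℝ)
    (hrot : ∀ ρ' ∈ rotSetOn F K, ⟪ρ' - lam • v, v⟫ = 0)
    (hunb : ∀ C : ℝ, ∃ (n : ℕ) (z : E d), Tproj d z ∈ K ∧ C < |devIn F (lam • v) v n z|) :
    ∃ R : Set (Torus d), R ⊆ K ∧ (∃ T : Set (Torus d), IsGδ T ∧ R = T ∩ K) ∧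
      K ⊆ closure R ∧
      ∀ z : E d, Tproj d z ∈ R →
        (∀ C : ℝ, ∃ n : ℕ, C < devIn F (lam • v) v n z) ∧
        (∀ C : ℝ, ∃ n : ℕ, devIn F (lam • v) v n z < C) := by
  classical
  obtain ⟨hl1, hl2⟩ := hlift
  have hinv : ∀ (n : ℕ) (a b : E d), QuotientAddGroup.leftRel (intLattice d) a b →
      devIn F (lam • v) v n a = devIn F (lam • v) v n b := by
    intro n a b hab
    rw [QuotientAddGroup.leftRel_apply] at hab
    have hb : b = a + (-a + b) := by abel
    rw [hb, devIn_lattice F hl2 _ _ n a _ hab]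
  set D : ℕ → Torus d → ℝ :=
    fun n ζ => Quotient.liftOn' ζ (devIn F (lam • v) v n) (hinv n) with hDdef
  have hDmk : ∀ (n : ℕ) (z : E d), D n (Tproj d z) = devIn F (lam • v) v n z :=
    fun n z => rfl
  have hDc : ∀ n, Continuous (D n) :=
    fun n => Continuous.quotient_liftOn' (continuous_devIn F (lam • v) v n) _
  have hmkc : Continuous (Tproj d) := continuous_quot_mk
  have hqm : Continuous f := by
    rw [(QuotientAddGroup.isQuotientMap_mk (intLattice d)).continuous_iff]
    have h1 : f ∘ (QuotientAddGroup.mk : E d → Torus d) = Tproj d ∘ F :=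
      funext fun z => (hl1 z).symm
    rw [show (f ∘ (QuotientAddGroup.mk : E d → Torus d)) = f ∘ Tproj d from rfl] at h1
    show Continuous (f ∘ (QuotientAddGroup.mk : E d → Torus d))
    rw [show (f ∘ (QuotientAddGroup.mk : E d → Torus d)) = f ∘ Tproj d from rfl, h1]
    exact hmkc.comp F.continuous
  have hproj : ∀ (n : ℕ) (z : E d),
      Tproj d ((F : E d → E d)^[n] z) = f^[n] (Tproj d z) := by
    intro n
    induction n with
    | zero => intro z; simp
    | succ n ih =>
      intro z
      rw [Function.iterate_succ_apply', Function.iterate_succ_apply', ← ih z, hl1]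
  have hD0 : ∀ ζ, D 0 ζ = 0 := by
    intro ζ
    refine QuotientAddGroup.induction_on ζ (fun z => ?_)
    exact devIn_zero F (lam • v) v z
  have hcoc : ∀ a b ζ, D (a + b) ζ = D b (f^[a] ζ) + D a ζ := by
    intro a b ζ
    refine QuotientAddGroup.induction_on ζ (fun z => ?_)
    have h1 : f^[a] (Tproj d z) = Tproj d ((F : E d → E d)^[a] z) := (hproj a z).symm
    show D (a + b) (Tproj d z) = D b (f^[a] (Tproj d z)) + D a (Tproj d z)
    rw [h1, hDmk, hDmk, hDmk]
    exact devIn_cocycle F (lam • v) v a b z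
  have hfK : ∀ ζ ∈ K, f ζ ∈ K := by
    intro ζ hζ
    rw [← hKinv]
    exact Set.mem_image_of_mem f hζ
  have hsubl : ∀ ε > (0:ℝ), ∃ N : ℕ, ∀ n ≥ N, ∀ ζ ∈ K, |D n ζ| ≤ ε * n := by
    intro ε hε
    obtain ⟨N, hN⟩ := sublinear_devIn F hl2 K v lam hrot ε hε
    refine ⟨N, fun n hn ζ => ?_⟩
    refine QuotientAddGroup.induction_on ζ (fun z => ?_)
    intro hz
    show |D n (Tproj d z)| ≤ ε * n
    rw [hDmk]
    exact hN n hn z hz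
  have hunbD : ∀ C : ℝ, ∃ ζ ∈ K, ∃ n, C < |D n ζ| := by
    intro C
    obtain ⟨n, z, hz, h⟩ := hunb C
    exact ⟨Tproj d z, hz, n, by rw [hDmk]; exact h⟩
  have hdense_pos : ∀ (c : ℝ) (V : Set (Torus d)), IsOpen V → (V ∩ K).Nonempty →
      ∃ ζ ∈ V ∩ K, ∃ n, c < D n ζ := by
    intro c V hV hVK
    by_contra hcon
    push_neg at hcon
    obtain ⟨C, hC⟩ := cocycle_bounded_of_bddAbove_on_open hqm hKc hKne hfK hmin
      D hDc hD0 hcoc hsubl hV hVK (C₀ := c) hcon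
    obtain ⟨ζ, hζ, n, h⟩ := hunbD C
    exact absurd (hC ζ hζ n) (not_le.2 h)
  have hdense_neg : ∀ (c : ℝ) (V : Set (Torus d)), IsOpen V → (V ∩ K).Nonempty →
      ∃ ζ ∈ V ∩ K, ∃ n, D n ζ < -c := by
    intro c V hV hVK
    by_contra hcon
    push_neg at hcon
    have hcon' : ∀ ζ ∈ V ∩ K, ∀ n, (fun n ζ => -(D n ζ)) n ζ ≤ c := by
      intro ζ hζ n
      have := hcon ζ hζ n
      simp only
      linarith
    obtain ⟨C, hC⟩ := cocycle_bounded_of_bddAbove_on_open hqm hKc hKne hfK hmin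
      (fun n ζ => -(D n ζ)) (fun n => (hDc n).neg)
      (fun ζ => by simp [hD0]) (fun a b ζ => by simp [hcoc a b ζ]; ring)
      (by
        intro ε hε
        obtain ⟨N, hN⟩ := hsubl ε hε
        exact ⟨N, fun n hn ζ hζ => by simpa using hN n hn ζ hζ⟩)
      hV hVK (C₀ := c) hcon'
    obtain ⟨ζ, hζ, n, h⟩ := hunbD C
    have := hC ζ hζ n
    rw [abs_neg] at this
    exact absurd this (not_le.2 h)
  set Op : ℕ → Set (Torus d) := fun m => ⋃ n, {ζ | (m:ℝ) < D n ζ} with hOpdef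
  set Om : ℕ → Set (Torus d) := fun m => ⋃ n, {ζ | D n ζ < -(m:ℝ)} with hOmdef
  have hOpo : ∀ m, IsOpen (Op m) :=
    fun m => isOpen_iUnion fun n => isOpen_lt continuous_const (hDc n)
  have hOmo : ∀ m, IsOpen (Om m) :=
    fun m => isOpen_iUnion fun n => isOpen_lt (hDc n) continuous_const
  refine ⟨(⋂ m : ℕ, (Op m ∩ Om m)) ∩ K, Set.inter_subset_right,
    ⟨⋂ m : ℕ, (Op m ∩ Om m), IsGδ.iInter fun m => ((hOpo m).inter (hOmo m)).isGδ, rfl⟩,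
    ?_, ?_⟩
  · -- density
    haveI : CompactSpace ↥K := isCompact_iff_compactSpace.mp hKc
    set A : ℕ × Bool → Set ↥K :=
      fun p => Subtype.val ⁻¹' (bif p.2 then Op p.1 else Om p.1) with hAdef
    have hAopen : ∀ p, IsOpen (A p) := by
      rintro ⟨m, b⟩
      cases b
      · exact (hOmo m).preimage continuous_subtype_val
      · exact (hOpo m).preimage continuous_subtype_val
    have hAdense : ∀ p, Dense (A p) := by
      rintro ⟨m, b⟩
      rw [dense_iff_inter_open]
      rintro U hU hUne
      obtain ⟨V, hVo, hVU⟩ := isOpen_induced_iff.1 hU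
      obtain ⟨x, hx⟩ := hUne
      have hxV : (x : Torus d) ∈ V := by
        rw [← hVU] at hx
        exact hx
      have hVK : (V ∩ K).Nonempty := ⟨x, hxV, x.2⟩
      cases b
      · obtain ⟨ζ, hζ, n, hn⟩ := hdense_neg m V hVo hVK
        refine ⟨⟨ζ, hζ.2⟩, ?_, ?_⟩
        · rw [← hVU]; exact hζ.1
        · show (ζ : Torus d) ∈ (bif false then Op m else Om m)
          show ζ ∈ Om m
          exact Set.mem_iUnion.2 ⟨n, hn⟩
      · obtain ⟨ζ, hζ, n, hn⟩ := hdense_pos m V hVo hVK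
        refine ⟨⟨ζ, hζ.2⟩, ?_, ?_⟩
        · rw [← hVU]; exact hζ.1
        · show (ζ : Torus d) ∈ (bif true then Op m else Om m)
          show ζ ∈ Op m
          exact Set.mem_iUnion.2 ⟨n, hn⟩
    have hdense : Dense (⋂ p, A p) := dense_iInter_of_isOpen hAopen hAdense
    intro ζ hζ
    rw [mem_closure_iff]
    intro W hW hζW
    have hx : (⟨ζ, hζ⟩ : ↥K) ∈ closure (⋂ p, A p) := hdense _
    rw [mem_closure_iff] at hx
    obtain ⟨y, hyW, hyA⟩ := hx (Subtype.val ⁻¹' W)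
      (hW.preimage continuous_subtype_val) hζW
    refine ⟨(y : Torus d), hyW, ?_, y.2⟩
    rw [Set.mem_iInter]
    intro m
    have h1 : y ∈ A (m, true) := Set.mem_iInter.1 hyA (m, true)
    have h2 : y ∈ A (m, false) := Set.mem_iInter.1 hyA (m, false)
    exact ⟨h1, h2⟩
  · -- final property
    intro z hz
    have hzT : Tproj d z ∈ ⋂ m : ℕ, (Op m ∩ Om m) := hz.1
    rw [Set.mem_iInter] at hzT
    constructor
    · intro C
      obtain ⟨m, hm⟩ := exists_nat_ge C
      obtain ⟨n, hn⟩ := Set.mem_iUnion.1 (hzT m).1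
      refine ⟨n, lt_of_le_of_lt hm ?_⟩
      have : (m:ℝ) < D n (Tproj d z) := hn
      rwa [hDmk] at this
    · intro C
      obtain ⟨m, hm⟩ := exists_nat_ge (-C)
      obtain ⟨n, hn⟩ := Set.mem_iUnion.1 (hzT m).2
      refine ⟨n, ?_⟩
      have h1 : D n (Tproj d z) < -(m:ℝ) := hn
      rw [hDmk] at h1
      linarith

end
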